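/- arXiv:2605.27278 — 7 statements merged into one kernel-verified Lean document; each statement's English description precedes it below -/
import Mathlib

section
/- For every real number t > 0, letting T = ((t+1)·ln(t+1))/t, we have T − 1 − ln T < t²/8. -/
open Real Set

lemma lemA (t : ℝ) (ht : 0 < t) : (1 + t) * Real.log (1 + t) < t + t^2/2 := by
  have key : StrictMonoOn (fun s : ℝ => s + s^2/2 - (1+s) * Real.log (1+s)) (Ici 0) := by
    apply strictMonoOn_of_deriv_pos (convex_Ici 0)
    · apply ContinuousOn.sub
      · fun_prop
      · apply ContinuousOn.mul (by fun_prop)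
        apply ContinuousOn.log (by fun_prop)
        intro x hx
        simp only [mem_Ici] at hx
        intro h; linarith
    · intro x hx
      rw [interior_Ici] at hx
      simp only [mem_Ioi] at hx
      have h1 : (0:ℝ) < 1 + x := by linarith
      have d1 : HasDerivAt (fun s : ℝ => 1 + s) 1 x := by
        simpa using (hasDerivAt_id x).const_add 1
      have dlog : HasDerivAt (fun s : ℝ => Real.log (1+s)) (1/(1+x)) x := by
        simpa using d1.log (ne_of_gt h1)
      have dmul : HasDerivAt (fun s : ℝ => (1+s) * Real.log (1+s))
          (Real.log (1+x) + 1) x := by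
        have := d1.mul dlog
        exact this.congr_deriv (by rw [one_mul, one_div, mul_inv_cancel₀ (ne_of_gt h1)])
      have dpoly : HasDerivAt (fun s : ℝ => s + s^2/2) (1 + x) x := by
        have h2 : HasDerivAt (fun s : ℝ => s^2/2) x x := by
          simpa using (hasDerivAt_pow 2 x).div_const 2
        exact (hasDerivAt_id' x).add h2
      have hd : HasDerivAt (fun s : ℝ => s + s^2/2 - (1+s) * Real.log (1+s))
          (1 + x - (Real.log (1+x) + 1)) x := dpoly.sub dmul
      rw [hd.deriv]
      have hlt : Real.log (1+x) < (1+x) - 1 :=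
        Real.log_lt_sub_one_of_pos h1 (by intro h; linarith [h])
      linarith
  have h0 : (0:ℝ) ∈ Ici (0:ℝ) := mem_Ici.mpr le_rfl
  have ht' : t ∈ Ici (0:ℝ) := le_of_lt ht
  have := key h0 ht' ht
  simp only [Real.log_one] at this
  norm_num at this
  linarith

lemma lemB (x : ℝ) (hx : 1 < x) : x - 1 - (x-1)^2/2 < Real.log x := by
  have key : StrictMonoOn (fun s : ℝ => Real.log s - (s-1) + (s-1)^2/2) (Ici 1) := by
    apply strictMonoOn_of_deriv_pos (convex_Ici 1)
    · apply ContinuousOn.add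
      apply ContinuousOn.sub
      · apply ContinuousOn.log (by fun_prop)
        intro y hy; simp only [mem_Ici] at hy; intro h; linarith
      · fun_prop
      · fun_prop
    · intro y hy
      rw [interior_Ici] at hy
      simp only [mem_Ioi] at hy
      have hy0 : (0:ℝ) < y := by linarith
      have dlog : HasDerivAt Real.log y⁻¹ y := Real.hasDerivAt_log (ne_of_gt hy0)
      have d2 : HasDerivAt (fun s : ℝ => s - 1) 1 y := by
        simpa using (hasDerivAt_id y).sub_const 1
      have d3 : HasDerivAt (fun s : ℝ => (s-1)^2/2) (y-1) y := by
        have := ((d2.pow 2).div_const 2)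
        simpa using this
      have hd : HasDerivAt (fun s : ℝ => Real.log s - (s-1) + (s-1)^2/2)
          (y⁻¹ - 1 + (y-1)) y := (dlog.sub d2).add d3
      rw [hd.deriv]
      have hpos : 0 < (y-1)^2 / y := div_pos (pow_pos (by linarith) 2) hy0
      have hexp : y⁻¹ - 1 + (y-1) = (y-1)^2 / y := by field_simp; ring
      rw [hexp]; exact hpos
  have h1 : (1:ℝ) ∈ Ici (1:ℝ) := mem_Ici.mpr le_rfl
  have hx' : x ∈ Ici (1:ℝ) := le_of_lt hx
  have := key h1 hx' hx
  simp only [Real.log_one] at this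
  norm_num at this
  linarith

theorem stmt_1 (t : ℝ) (ht : 0 < t) :
    ((t + 1) * Real.log (t + 1)) / t - 1 - Real.log (((t + 1) * Real.log (t + 1)) / t)
      < t ^ 2 / 8 := by
  set T : ℝ := ((t + 1) * Real.log (t + 1)) / t with hTdef
  have h1t : (0:ℝ) < 1 + t := by linarith
  -- lower bound: t < (t+1) log(t+1)
  have hlow : t < (t + 1) * Real.log (t + 1) := by
    have hinv : (0:ℝ) < 1/(1+t) := by positivity
    have hne : 1/(1+t) ≠ 1 := by
      intro h
      have : (1:ℝ) = 1 + t := by field_simp at h; linarith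
      linarith
    have := Real.log_lt_sub_one_of_pos hinv hne
    rw [Real.log_div one_ne_zero (ne_of_gt h1t), Real.log_one] at this
    have h2 : Real.log (1+t) > 1 - 1/(1+t) := by linarith
    have h3 : (1+t) * Real.log (1+t) > (1+t) * (1 - 1/(1+t)) := by
      apply (mul_lt_mul_iff_right₀ h1t).mpr h2
    have h4 : (1+t) * (1 - 1/(1+t)) = t := by field_simp; ring
    rw [h4] at h3
    calc t < (1+t) * Real.log (1+t) := h3
      _ = (t+1) * Real.log (t+1) := by ring_nf
  have hT1 : 1 < T := by
    rw [hTdef]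
    rw [lt_div_iff₀ ht]
    linarith
  -- upper bound: T < 1 + t/2
  have hup : (t + 1) * Real.log (t + 1) < t + t^2/2 := by
    have := lemA t ht
    calc (t+1) * Real.log (t+1) = (1+t) * Real.log (1+t) := by ring_nf
      _ < t + t^2/2 := this
  have hT2 : T < 1 + t/2 := by
    rw [hTdef, div_lt_iff₀ ht]
    nlinarith
  have hB := lemB T hT1
  nlinarith [sq_nonneg (T - 1 - t/2), sq_nonneg (T-1)]
end

section
/- Let ε > 0 and ξ = e^{ε/2}. For every integer n ≥ 2, the minimum over integers k with 1 ≤ k ≤ n−1 of (kξ² + n − k)/(k(n−k)) is at least (ξ+1)²/n. -/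
theorem stmt_6 (n : ℕ) (hn : 2 ≤ n) (ε : ℝ) (hε : 0 < ε) (k : ℕ)
    (hk1 : 1 ≤ k) (hk2 : k ≤ n - 1) :
    ((k : ℝ) * Real.exp (ε / 2) ^ 2 + (n : ℝ) - k) / ((k : ℝ) * ((n : ℝ) - k))
      ≥ (Real.exp (ε / 2) + 1) ^ 2 / n := by
  set x := Real.exp (ε / 2) with hx
  have hx0 : 0 < x := Real.exp_pos _
  have hk : (1 : ℝ) ≤ (k : ℝ) := by exact_mod_cast hk1
  have hkn : k + 1 ≤ n := by omega
  have hnk : (1 : ℝ) ≤ (n : ℝ) - k := by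
    have : ((k : ℝ) + 1) ≤ n := by exact_mod_cast hkn
    linarith
  have hn0 : (0 : ℝ) < n := by positivity
  rw [ge_iff_le, div_le_div_iff₀ hn0 (by nlinarith)]
  nlinarith [sq_nonneg ((k : ℝ) * x - ((n : ℝ) - k)), sq_nonneg x]
end

section
/- Let n, d ≥ 2, r ∈ [d−1], c = (nr−d)/(d(n−1)), and ε > 0. Suppose n = d/r (so c = 0), and let P_1,…,P_n be pairwise orthogonal rank-r projections summing to I_d. For μ ∈ [0, d/(d−r)], define σ_x = (μ/d)I_d + ((1−μ)/r)P_x. Then σ_{x'} ≤ e^ε σ_x for all x, x' ∈ [n] (i.e., the mechanism is ε-QLDP) if and only if n/(n−1+e^ε) ≤ μ ≤ n/(n−1+e^{−ε}). -/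
open Matrix in
open ComplexOrder in
lemma psd_real_smul {d : ℕ} (c : ℝ) (hc : 0 ≤ c) {M : Matrix (Fin d) (Fin d) ℂ}
    (hM : M.PosSemidef) : ((c : ℂ) • M).PosSemidef := by
  refine Matrix.PosSemidef.of_dotProduct_mulVec_nonneg ?_ ?_
  · rw [Matrix.IsHermitian, Matrix.conjTranspose_smul, hM.1.eq]
    congr 1
    simp
  · intro x
    rw [Matrix.smul_mulVec, dotProduct_smul, smul_eq_mul]
    exact mul_nonneg (Complex.zero_le_real.mpr hc) (hM.dotProduct_mulVec_nonneg x)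

open Matrix in
open ComplexOrder in
lemma psd_sum {n d : ℕ} (P : Fin n → Matrix (Fin d) (Fin d) ℂ)
    (hP : ∀ i, (P i).PosSemidef) (s : Finset (Fin n)) :
    (∑ i ∈ s, P i).PosSemidef := by
  classical
  induction s using Finset.induction with
  | empty => simpa using Matrix.PosSemidef.zero
  | insert _ _ hx ih =>
    rw [Finset.sum_insert hx]
    exact (hP _).add ih

set_option maxHeartbeats 2000000 in
open Matrix in
open ComplexOrder in
theorem stmt_11 (n d r : ℕ) (hn : 2 ≤ n) (hd : 2 ≤ d) (hr1 : 1 ≤ r) (hrd : r ≤ d - 1)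
    (hnd : d = n * r) (ε : ℝ) (hε : 0 < ε)
    (P : Fin n → Matrix (Fin d) (Fin d) ℂ)
    (hherm : ∀ i, (P i).IsHermitian)
    (hproj : ∀ i, P i * P i = P i)
    (htr : ∀ i, (P i).trace = (r : ℂ))
    (horth : ∀ i j, i ≠ j → P i * P j = 0)
    (hsum : ∑ i, P i = 1)
    (μ : ℝ) (hμ0 : 0 ≤ μ) (hμ1 : μ ≤ (d : ℝ) / ((d : ℝ) - r))
    (σ : Fin n → Matrix (Fin d) (Fin d) ℂ)
    (hσ : ∀ x, σ x = ((μ / d : ℝ) : ℂ) • 1 + (((1 - μ) / r : ℝ) : ℂ) • P x) :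
    (∀ x x', ((Real.exp ε : ℂ) • σ x - σ x').PosSemidef) ↔
      ((n : ℝ) / ((n : ℝ) - 1 + Real.exp ε) ≤ μ ∧
        μ ≤ (n : ℝ) / ((n : ℝ) - 1 + Real.exp (-ε))) := by
  classical
  set E := Real.exp ε with hEdef
  have hE : 0 < E := Real.exp_pos ε
  have hE1 : 1 ≤ E := Real.one_le_exp hε.le
  have hprod : Real.exp (-ε) * E = 1 := by
    rw [hEdef, ← Real.exp_add]; simp
  have hE' : 0 < Real.exp (-ε) := Real.exp_pos _
  have hrR : (0:ℝ) < r := by exact_mod_cast hr1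
  have hnR : (2:ℝ) ≤ n := by exact_mod_cast hn
  have hdR : (0:ℝ) < d := by positivity
  have hndR : (d:ℝ) = n * r := by exact_mod_cast hnd
  have hD : (0:ℝ) < (n:ℝ) - 1 + E := by nlinarith
  have hD' : (0:ℝ) < (n:ℝ) - 1 + Real.exp (-ε) := by nlinarith
  -- scalar coefficients
  set L : ℝ := (E - 1) * (μ / d) - (1 - μ) / r with hLdef
  set U : ℝ := (E - 1) * (μ / d) + E * ((1 - μ) / r) with hUdef
  have hLd : L * d = μ * ((n:ℝ) - 1 + E) - n := by
    rw [hLdef, hndR]; field_simp; ring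
  have hUd : U * d = (n:ℝ) * E - μ * (((n:ℝ) - 1) * E + 1) := by
    rw [hUdef, hndR]; field_simp; ring
  have hmulpos : ∀ t : ℝ, 0 ≤ t ↔ 0 ≤ t * d := fun t =>
    (mul_nonneg_iff_of_pos_right hdR).symm
  have lowIff : 0 ≤ L ↔ (n : ℝ) / ((n : ℝ) - 1 + E) ≤ μ := by
    rw [hmulpos L, hLd, div_le_iff₀ hD]
    constructor <;> intro h <;> linarith
  have hexp : Real.exp (-ε) = E⁻¹ := by rw [hEdef, ← Real.exp_neg]
  have hDD : (0:ℝ) < ((n:ℝ) - 1) * E + 1 := by nlinarith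
  have hdiv : (n : ℝ) / ((n : ℝ) - 1 + Real.exp (-ε)) = (n:ℝ) * E / (((n:ℝ) - 1) * E + 1) := by
    rw [div_eq_div_iff hD'.ne' hDD.ne', hexp]
    field_simp
  have upIff : 0 ≤ U ↔ μ ≤ (n : ℝ) / ((n : ℝ) - 1 + Real.exp (-ε)) := by
    rw [hmulpos U, hUd, hdiv, le_div_iff₀ hDD]
    constructor <;> intro h <;> linarith
  have hα : 0 ≤ (E - 1) * (μ / d) := by
    have : 0 ≤ μ / d := by positivity
    nlinarith
  -- PSD of each projection
  have hPpsd : ∀ i, (P i).PosSemidef := by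
    intro i
    have := Matrix.posSemidef_conjTranspose_mul_self (P i)
    rwa [(hherm i).eq, hproj i] at this
  constructor
  · -- forward direction
    intro h
    -- pick two distinct indices
    have h0n : 0 < n := by omega
    have h1n : 1 < n := by omega
    set x0 : Fin n := ⟨0, h0n⟩
    set x1 : Fin n := ⟨1, h1n⟩
    have hne : x0 ≠ x1 := by simp [x0, x1, Fin.ext_iff]
    -- find a nonzero vector in the range of P x0
    have hP0 : P x0 ≠ 0 := by
      intro h0
      have h1 := htr x0
      rw [h0, Matrix.trace_zero] at h1
      have hr0 : (r:ℂ) ≠ 0 := Nat.cast_ne_zero.mpr (by omega)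
      exact hr0 h1.symm
    obtain ⟨i, j, hij⟩ : ∃ i j, P x0 i j ≠ 0 := by
      by_contra hc
      push_neg at hc
      exact hP0 (by ext i j; simpa using hc i j)
    set w : Fin d → ℂ := (P x0) *ᵥ Pi.single j 1 with hwdef
    have hwne : w i ≠ 0 := by simp [hwdef, hij]
    have hw0 : (P x0) *ᵥ w = w := by
      rw [hwdef, Matrix.mulVec_mulVec, hproj]
    have hw1 : (P x1) *ᵥ w = 0 := by
      rw [hwdef, Matrix.mulVec_mulVec, horth x1 x0 hne.symm, Matrix.zero_mulVec]
    -- the dot product star w ⬝ᵥ w as a positive real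
    set S : ℝ := ∑ k, Complex.normSq (w k) with hSdef
    have hwS : star w ⬝ᵥ w = (S : ℂ) := by
      rw [hSdef, Complex.ofReal_sum]
      simp only [dotProduct, Pi.star_apply]
      congr 1
      ext k
      rw [Complex.star_def, ← Complex.normSq_eq_conj_mul_self]
    have hSpos : 0 < S := by
      rw [hSdef]
      apply Finset.sum_pos' (fun k _ => Complex.normSq_nonneg _)
      exact ⟨i, Finset.mem_univ i, Complex.normSq_pos.mpr hwne⟩
    have key : ∀ (x x' : Fin n) (c : ℝ),
        (P x) *ᵥ w = ((if x = x0 then 1 else 0 : ℂ)) • w →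
        (P x') *ᵥ w = ((if x' = x0 then 1 else 0 : ℂ)) • w → True := fun _ _ _ _ _ => trivial
    -- upper bound from h x0 x1
    have hu : 0 ≤ U := by
      have hpsd := (h x0 x1).dotProduct_mulVec_nonneg w
      have hmv : ((E : ℂ) • σ x0 - σ x1) *ᵥ w = ((U : ℝ) : ℂ) • w := by
        simp only [hσ, Matrix.sub_mulVec, Matrix.add_mulVec, Matrix.smul_mulVec,
          Matrix.one_mulVec, hw0, hw1, smul_zero, add_zero]
        have hcast : ((U : ℝ) : ℂ) = (E : ℂ) * ((μ / d : ℝ) : ℂ) + (E : ℂ) * (((1 - μ) / r : ℝ) : ℂ) - ((μ / d : ℝ) : ℂ) := by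
          rw [hUdef]; push_cast; ring
        rw [hcast]
        module
      rw [hmv, dotProduct_smul, smul_eq_mul, hwS, ← Complex.ofReal_mul] at hpsd
      have hus := Complex.zero_le_real.mp hpsd
      exact (mul_nonneg_iff_of_pos_right hSpos).mp hus
    -- lower bound from h x1 x0
    have hl : 0 ≤ L := by
      have hpsd := (h x1 x0).dotProduct_mulVec_nonneg w
      have hmv : ((E : ℂ) • σ x1 - σ x0) *ᵥ w = ((L : ℝ) : ℂ) • w := by
        simp only [hσ, Matrix.sub_mulVec, Matrix.add_mulVec, Matrix.smul_mulVec,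
          Matrix.one_mulVec, hw0, hw1, smul_zero, add_zero]
        have hcast : ((L : ℝ) : ℂ) = (E : ℂ) * ((μ / d : ℝ) : ℂ) - (((μ / d : ℝ) : ℂ) + (((1 - μ) / r : ℝ) : ℂ)) := by
          rw [hLdef]; push_cast; ring
        rw [hcast]
        module
      rw [hmv, dotProduct_smul, smul_eq_mul, hwS, ← Complex.ofReal_mul] at hpsd
      have hls := Complex.zero_le_real.mp hpsd
      exact (mul_nonneg_iff_of_pos_right hSpos).mp hls
    exact ⟨lowIff.mp hl, upIff.mp hu⟩
  · -- reverse direction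
    rintro ⟨h1, h2⟩ x x'
    have hL : 0 ≤ L := lowIff.mpr h1
    have hU : 0 ≤ U := upIff.mpr h2
    have hab : 0 ≤ μ / d + (1 - μ) / r := by
      have hdr : (0:ℝ) < (d:ℝ) - r := by nlinarith [hndR, hnR, hrR]
      have hμd : μ * ((d:ℝ) - r) ≤ d := by
        rw [le_div_iff₀ hdr] at hμ1; linarith
      have heq : μ / d + (1 - μ) / r = (μ * r + d * (1 - μ)) / (d * r) := by
        field_simp
      rw [heq]
      apply div_nonneg _ (by positivity)
      nlinarith
    by_cases hxx : x = x'
    · -- x = x' case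
      subst hxx
      have hdecomp : ((E : ℂ) • σ x - σ x) =
          (((E - 1) * (μ / d) : ℝ) : ℂ) • (1 - P x) +
          (((E - 1) * (μ / d + (1 - μ) / r) : ℝ) : ℂ) • P x := by
        rw [hσ]
        push_cast
        module
      rw [hdecomp]
      have h1P : (1 - P x : Matrix (Fin d) (Fin d) ℂ).PosSemidef := by
        have : (1 - P x : Matrix (Fin d) (Fin d) ℂ) = ∑ i ∈ Finset.univ.erase x, P i := by
          rw [← hsum, Finset.sum_erase_eq_sub (Finset.mem_univ x)]
        rw [this]
        exact psd_sum P hPpsd _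
      exact (psd_real_smul _ hα h1P).add
        (psd_real_smul _ (mul_nonneg (by linarith) hab) (hPpsd x))
    · -- x ≠ x' case
      have hdecomp : ((E : ℂ) • σ x - σ x') =
          ((U : ℝ) : ℂ) • P x + ((L : ℝ) : ℂ) • P x' +
          (((E - 1) * (μ / d) : ℝ) : ℂ) • (1 - P x - P x') := by
        rw [hσ, hσ, hUdef, hLdef]
        push_cast
        module
      rw [hdecomp]
      have hQ : (1 - P x - P x' : Matrix (Fin d) (Fin d) ℂ).PosSemidef := by
        have hsub : ({x, x'} : Finset (Fin n)) ⊆ Finset.univ := Finset.subset_univ _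
        have hpair : ∑ i ∈ ({x, x'} : Finset (Fin n)), P i = P x + P x' :=
          Finset.sum_pair hxx
        have : (1 - P x - P x' : Matrix (Fin d) (Fin d) ℂ) =
            ∑ i ∈ Finset.univ \ {x, x'}, P i := by
          have := Finset.sum_sdiff (f := P) hsub
          rw [hpair, hsum] at this
          rw [← this]; abel
        rw [this]
        exact psd_sum P hPpsd _
      exact ((psd_real_smul _ hU (hPpsd x)).add (psd_real_smul _ hL (hPpsd x'))).add
        (psd_real_smul _ hα hQ)
end

section
/- For ε > 0 and η ∈ (0, 1/(1+√ε)), the inequality η(e^ε − e^{ηε(1+√ε)}) < (1−η)(e^{ηε(1+√ε)} − 1) holds for all sufficiently small ε > 0 (uniformly in η ∈ (0, 1/(1+√ε))). -/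
theorem stmt_13 :
    ∃ ε₀ > (0 : ℝ), ∀ ε : ℝ, 0 < ε → ε ≤ ε₀ →
      ∀ η : ℝ, 0 < η → η < 1 / (1 + Real.sqrt ε) →
        η * (Real.exp ε - Real.exp (η * ε * (1 + Real.sqrt ε)))
          < (1 - η) * (Real.exp (η * ε * (1 + Real.sqrt ε)) - 1) := by
  refine ⟨1/4, by norm_num, fun ε hε hε4 η hη hη' => ?_⟩
  set s := Real.sqrt ε with hs
  have hs0 : 0 < s := Real.sqrt_pos.mpr hε
  have hs2 : s ^ 2 = ε := Real.sq_sqrt hε.le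
  have hsle : s ≤ 1/2 := by
    have h : Real.sqrt (1/4) = 1/2 := by
      rw [show (1/4 : ℝ) = (1/2)^2 by norm_num, Real.sqrt_sq (by norm_num)]
    calc s ≤ Real.sqrt (1/4) := Real.sqrt_le_sqrt hε4
    _ = 1/2 := h
  have ha : 0 < η * ε * (1 + s) := by positivity
  -- e^a > 1 + a
  have h1 : 1 + η * ε * (1 + s) < Real.exp (η * ε * (1 + s)) :=
    Real.add_one_lt_exp ha.ne' |>.trans_eq' (by ring_nf)
  -- e^ε ≤ 1/(1-ε)
  have hε1 : ε < 1 := by linarith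
  have h2 : Real.exp ε ≤ 1 / (1 - ε) :=
    Real.exp_bound_div_one_sub_of_interval hε.le hε1
  -- ε/(1-ε) ≤ ε(1+s)
  have h3 : 1 / (1 - ε) ≤ 1 + ε * (1 + s) := by
    rw [div_le_iff₀ (by linarith)]
    have : ε * s ≤ s * (1 - ε - ε * s) := by
      nlinarith [hs2, hs0, hsle]
    nlinarith [hs2]
  have key : η * Real.exp ε + (1 - η) < Real.exp (η * ε * (1 + s)) := by
    have : η * Real.exp ε ≤ η * (1 + ε * (1 + s)) := by
      have := h2.trans h3
      nlinarith
    nlinarith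
  nlinarith [key]
end

section
/- Let n ≥ 2 and ε > 0, set u ∈ [1/n, 1/2], and define μ₀ by 1/(1−μ₀) = 1 + 1/(u(e^ε − 1)), i.e., μ₀ = 1/(u(e^ε−1)+1). Then with c = (nu−1)/(n−1), the quantity 1 − G(μ₀), where G(μ₀) = (1−2u)μ₀ + c(2uμ₀ + 1 − μ₀) + 2(1−c)√(uμ₀(uμ₀+1−μ₀)), equals ((e^{ε/2}−1)²/(n−1)) · nu(1−u)/(u(e^ε−1)+1). -/
theorem stmt_15 (n : ℕ) (hn : 2 ≤ n) (ε u : ℝ) (hε : 0 < ε)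
    (hu1 : 1 / (n : ℝ) ≤ u) (hu2 : u ≤ 1 / 2)
    (μ c : ℝ)
    (hμ : μ = 1 / (u * (Real.exp ε - 1) + 1))
    (hc : c = ((n : ℝ) * u - 1) / ((n : ℝ) - 1)) :
    1 - ((1 - 2 * u) * μ + c * (2 * u * μ + 1 - μ)
          + 2 * (1 - c) * Real.sqrt (u * μ * (u * μ + 1 - μ)))
      = (Real.exp (ε / 2) - 1) ^ 2 / ((n : ℝ) - 1)
          * ((n : ℝ) * u * (1 - u) / (u * (Real.exp ε - 1) + 1)) := by
  have hn1 : (1:ℝ) < (n:ℝ) := by exact_mod_cast Nat.lt_of_lt_of_le one_lt_two hn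
  have hn0 : (0:ℝ) < (n:ℝ) := by linarith
  have hu0 : 0 < u := lt_of_lt_of_le (by positivity) hu1
  have hE : 1 < Real.exp ε := by nlinarith [Real.add_one_le_exp ε]
  have hD : 0 < u * (Real.exp ε - 1) + 1 := by nlinarith
  have hs : Real.exp (ε / 2) ^ 2 = Real.exp ε := by
    rw [sq, ← Real.exp_add]; ring_nf
  have hsqrt : Real.sqrt (u * μ * (u * μ + 1 - μ))
      = u * Real.exp (ε / 2) / (u * (Real.exp ε - 1) + 1) := by
    have harg : u * μ * (u * μ + 1 - μ)
        = (u * Real.exp (ε / 2) / (u * (Real.exp ε - 1) + 1)) ^ 2 := by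
      rw [div_pow, mul_pow, hs, hμ]
      field_simp
      ring
    rw [harg, Real.sqrt_sq (by positivity)]
  have h2 : (Real.exp (ε / 2) - 1) ^ 2
      = Real.exp ε - 2 * Real.exp (ε / 2) + 1 := by rw [← hs]; ring
  rw [hsqrt, hμ, hc, h2]
  have hn1' : (n:ℝ) - 1 ≠ 0 := by linarith
  field_simp
  ring
end

section
/- Let ε > 0, θ = e^ε − 1, n ≥ 2, and L(t) = t ln t. Then max over integers k ∈ [0:n] of (kL(θ+1) − nL((kθ+n)/n))/(kθ+n) is at most L(θ+1)/θ − 1 − ln(L(θ+1)/θ), which in turn is strictly less than θ²/8. -/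
open Real

lemma aux_deriv_log1p (x : ℝ) (hx : 0 < x) :
    HasDerivAt (fun s : ℝ => Real.log (1 + s)) (1 + x)⁻¹ x := by
  have h : HasDerivAt (fun s : ℝ => 1 + s) 1 x := (hasDerivAt_id x).const_add 1
  simpa using h.log (by positivity)

lemma aux1_deriv (x : ℝ) (hx : 0 < x) :
    HasDerivAt (fun s : ℝ => Real.log (1 + s) - s + s ^ 2 / 2) ((1 + x)⁻¹ - 1 + x) x := by
  exact ((aux_deriv_log1p x hx).sub (hasDerivAt_id x)).add
    ((hasDerivAt_pow 2 x).div_const 2 |>.congr_deriv (by ring))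

lemma aux1 (s : ℝ) (hs : 0 < s) : s - s ^ 2 / 2 < Real.log (1 + s) := by
  set f : ℝ → ℝ := fun s => Real.log (1 + s) - s + s ^ 2 / 2 with hf
  have hderiv : ∀ x ∈ interior (Set.Ici (0 : ℝ)), 0 < deriv f x := by
    intro x hx
    rw [interior_Ici] at hx
    have hx' : (0 : ℝ) < x := hx
    rw [(aux1_deriv x hx').deriv]
    have h1 : (0:ℝ) < 1 + x := by linarith
    have h2 : (1 + x) * (1 + x)⁻¹ = 1 := mul_inv_cancel₀ (ne_of_gt h1)
    nlinarith [mul_pos hx' hx', inv_pos.mpr h1]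
  have hcont : ContinuousOn f (Set.Ici 0) := by
    apply ContinuousOn.add (ContinuousOn.sub ?_ (continuousOn_id)) (by fun_prop)
    apply ContinuousOn.log (by fun_prop)
    intro x hx
    have : (0:ℝ) ≤ x := hx
    positivity
  have hmono : StrictMonoOn f (Set.Ici 0) :=
    strictMonoOn_of_deriv_pos (convex_Ici 0) hcont hderiv
  have := hmono (Set.self_mem_Ici) (Set.mem_Ici.mpr hs.le) hs
  simp only [hf] at this
  simp at this
  linarith

lemma aux2_deriv (x : ℝ) (hx : 0 < x) :
    HasDerivAt (fun t : ℝ => t + t ^ 2 / 2 - (1 + t) * Real.log (1 + t))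
      (1 + x - (1 * Real.log (1 + x) + (1 + x) * (1 + x)⁻¹)) x := by
  refine HasDerivAt.sub ?_ ?_
  · exact ((hasDerivAt_id x).add ((hasDerivAt_pow 2 x).div_const 2 |>.congr_deriv (by ring)))
  · exact ((hasDerivAt_id x).const_add 1).mul (aux_deriv_log1p x hx)

lemma aux2 (t : ℝ) (ht : 0 < t) : (1 + t) * Real.log (1 + t) ≤ t + t ^ 2 / 2 := by
  set g : ℝ → ℝ := fun t => t + t ^ 2 / 2 - (1 + t) * Real.log (1 + t) with hg
  have hderiv : ∀ x ∈ interior (Set.Ici (0 : ℝ)), 0 ≤ deriv g x := by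
    intro x hx
    rw [interior_Ici] at hx
    have hx' : (0 : ℝ) < x := hx
    have h1 : (0 : ℝ) < 1 + x := by linarith
    rw [(aux2_deriv x hx').deriv]
    have h2 : (1 + x) * (1 + x)⁻¹ = 1 := mul_inv_cancel₀ (ne_of_gt h1)
    rw [h2]
    have h3 : Real.log (1 + x) ≤ x := by
      have := Real.log_le_sub_one_of_pos h1
      linarith
    linarith
  have hdiff : DifferentiableOn ℝ g (interior (Set.Ici 0)) := by
    intro x hx
    rw [interior_Ici] at hx
    exact (aux2_deriv x hx).differentiableAt.differentiableWithinAt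
  have hcont : ContinuousOn g (Set.Ici 0) := by
    apply ContinuousOn.sub (by fun_prop)
    apply ContinuousOn.mul (by fun_prop)
    apply ContinuousOn.log (by fun_prop)
    intro x hx
    have : (0:ℝ) ≤ x := hx
    positivity
  have hmono : MonotoneOn g (Set.Ici 0) :=
    monotoneOn_of_deriv_nonneg (convex_Ici 0) hcont hdiff hderiv
  have := hmono (Set.self_mem_Ici) (Set.mem_Ici.mpr ht.le) ht.le
  simp only [hg] at this
  simp at this
  linarith

theorem stmt_16 (n : ℕ) (hn : 2 ≤ n) (ε : ℝ) (hε : 0 < ε)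
    (θ T : ℝ) (hθ : θ = Real.exp ε - 1)
    (hT : T = ((θ + 1) * Real.log (θ + 1)) / θ) :
    (∀ k : ℕ, k ≤ n →
        ((k : ℝ) * ((θ + 1) * Real.log (θ + 1))
            - (n : ℝ) * ((((k : ℝ) * θ + n) / n) * Real.log (((k : ℝ) * θ + n) / n)))
          / ((k : ℝ) * θ + n)
          ≤ T - 1 - Real.log T) ∧
    T - 1 - Real.log T < θ ^ 2 / 8 := by
  have hθpos : 0 < θ := by
    rw [hθ]
    have := Real.exp_lt_exp.mpr hε
    rw [Real.exp_zero] at this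
    linarith
  have hθ1 : (1:ℝ) < θ + 1 := by linarith
  have hlogpos : 0 < Real.log (θ + 1) := Real.log_pos hθ1
  have hlog_lb : θ / (θ + 1) < Real.log (θ + 1) := by
    have h := Real.log_lt_sub_one_of_pos (x := (θ + 1)⁻¹) (by positivity)
      (by
        intro h
        rw [inv_eq_one_div, div_eq_one_iff_eq (by positivity)] at h
        linarith)
    rw [Real.log_inv] at h
    have : (θ+1)⁻¹ - 1 = -(θ/(θ+1)) := by field_simp; ring
    rw [this] at h
    linarith
  have hT1 : 1 < T := by
    rw [hT, lt_div_iff₀ hθpos, one_mul]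
    calc θ = (θ + 1) * (θ / (θ + 1)) := by field_simp
    _ < (θ + 1) * Real.log (θ + 1) := by
        apply mul_lt_mul_of_pos_left hlog_lb (by linarith)
  have hTpos : 0 < T := by linarith
  constructor
  · intro k hk
    set a : ℝ := (k : ℝ) * θ + n with ha
    have hnpos : (0:ℝ) < n := by exact_mod_cast Nat.lt_of_lt_of_le (by norm_num) hn
    have hapos : 0 < a := by positivity
    set x : ℝ := a / n with hx
    have hxpos : 0 < x := by positivity
    have hax : a = n * x := by rw [hx]; field_simp
    have hkey : x * (Real.log T - Real.log x) ≤ T - x := by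
      have h := Real.log_le_sub_one_of_pos (x := T / x) (by positivity)
      rw [Real.log_div (ne_of_gt hTpos) (ne_of_gt hxpos)] at h
      have h2 := mul_le_mul_of_nonneg_left h hxpos.le
      have h3 : x * (T / x - 1) = T - x := by field_simp
      linarith [h2, h3 ▸ h2]
    have hL : (θ + 1) * Real.log (θ + 1) = θ * T := by
      rw [hT]; field_simp
    rw [div_le_iff₀ hapos]
    have hkθ : (k:ℝ) * θ = a - n := by rw [ha]; ring
    have expand : (k : ℝ) * ((θ + 1) * Real.log (θ + 1)) = (a - n) * T := by
      rw [hL, ← mul_assoc, hkθ]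
    rw [expand, hax]
    nlinarith [mul_le_mul_of_nonneg_left hkey hnpos.le]
  · have hTle : T ≤ 1 + θ / 2 := by
      rw [hT, div_le_iff₀ hθpos]
      have h := aux2 θ hθpos
      rw [add_comm 1 θ] at h
      nlinarith
    have hs := aux1 (T - 1) (by linarith)
    have h1T : 1 + (T - 1) = T := by ring
    rw [h1T] at hs
    have hsq : (T - 1) ^ 2 ≤ (θ / 2) ^ 2 := by
      apply sq_le_sq' <;> nlinarith
    nlinarith
end

section
/- Let ε > 0, u ∈ [0,1/2], and define probability vectors P_X = (1−u, u), P_{X|Y=0} = ((1−u)e^ε, u)/Z(0), P_{X|Y=1} = (1−u, ue^ε)/Z(1) with Z(0) = (1−u)e^ε + u, Z(1) = (1−u) + ue^ε. For F(t) = t², the classical F-divergence D_F(p‖q) = Σ_x q(x)F(p(x)/q(x)) satisfies D_F(P_{X|Y=1} ‖ P_X) ≥ D_F(P_{X|Y=0} ‖ P_X). -/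
theorem stmt_19 (ε u : ℝ) (hε : 0 < ε) (hu0 : 0 ≤ u) (hu : u ≤ 1 / 2) :
    let Z0 : ℝ := (1 - u) * Real.exp ε + u
    let Z1 : ℝ := (1 - u) + u * Real.exp ε
    let PX : Fin 2 → ℝ := ![1 - u, u]
    let P0 : Fin 2 → ℝ := ![(1 - u) * Real.exp ε / Z0, u / Z0]
    let P1 : Fin 2 → ℝ := ![(1 - u) / Z1, u * Real.exp ε / Z1]
    (∑ x, PX x * (P1 x / PX x) ^ 2) ≥ ∑ x, PX x * (P0 x / PX x) ^ 2 := by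
  intro Z0 Z1 PX P0 P1
  have he : 1 < Real.exp ε := by
    have := Real.add_one_lt_exp (ne_of_gt hε); linarith
  set e := Real.exp ε with hedef
  have ha : (0:ℝ) < 1 - u := by linarith
  have hZ0 : 0 < Z0 := by simp only [Z0]; nlinarith
  have hZ1 : 0 < Z1 := by simp only [Z1]; nlinarith
  simp only [PX, P0, P1, Fin.sum_univ_two, Matrix.cons_val_zero, Matrix.cons_val_one,
    Matrix.head_cons]
  rcases eq_or_lt_of_le hu0 with h0 | h0
  · subst h0
    simp only [Z0, Z1]
    rw [ge_iff_le]
    rw [div_zero, div_zero]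
    field_simp
    norm_num
  · rw [ge_iff_le]
    have hL : (1 - u) * ((1 - u) / Z1 / (1 - u)) ^ 2 + u * (u * e / Z1 / u) ^ 2
        = ((1 - u) + u * e ^ 2) / Z1 ^ 2 := by
      field_simp
    have hR : (1 - u) * ((1 - u) * e / Z0 / (1 - u)) ^ 2 + u * (u / Z0 / u) ^ 2
        = ((1 - u) * e ^ 2 + u) / Z0 ^ 2 := by
      field_simp
    rw [hL, hR, div_le_div_iff₀ (by positivity) (by positivity)]
    have key : 0 ≤ u * (1 - u) * (1 - 2 * u) * (e - 1) ^ 3 * (e + 1) := by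
      have h1 : (0:ℝ) ≤ 1 - 2 * u := by linarith
      have h2 : (0:ℝ) ≤ (e - 1) ^ 3 := pow_nonneg (by linarith) 3
      have h3 : (0:ℝ) ≤ e + 1 := by linarith
      exact mul_nonneg (mul_nonneg (mul_nonneg (mul_nonneg h0.le ha.le) h1) h2) h3
    simp only [Z0, Z1]
    nlinarith [key, sq_nonneg (e - 1), sq_nonneg (e + 1)]
end
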